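/- Let X ⊆ U, x₀ ∈ X, F : U → ℝᵖ with F(x) ∈ ℝᵖ₊₊ for all x ∈ X, f : U → ℝᵖ, and set s := f(x₀)/F(x₀) (componentwise). Then x₀ is a Pareto efficient point of x ↦ f(x)/F(x) over X if and only if x₀ is a Pareto efficient point of x ↦ f(x) − s * F(x) over X, where * denotes componentwise product and f(x)/F(x) is the componentwise quotient. -/

import Mathlib

open Filter Topology

/-- x₀ is a Pareto efficient point of φ over X: there is no x ∈ X with
φ(x) ≤ φ(x₀) componentwise and φ(x) ≠ φ(x₀). -/
def ParetoEff {Z : Type*} {p : ℕ} (X : Set Z) (φ : Z → (Fin p → ℝ)) (x₀ : Z) : Prop :=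
  ¬ ∃ x ∈ X, (∀ i, φ x i ≤ φ x₀ i) ∧ φ x ≠ φ x₀

theorem stmt8 {Z : Type*} [NormedAddCommGroup Z] [NormedSpace ℝ Z] {p : ℕ}
    (U X : Set Z) (hXU : X ⊆ U) (x₀ : Z) (hx₀ : x₀ ∈ X)
    (f F : Z → (Fin p → ℝ)) (hF : ∀ x ∈ U, ∀ i, 0 < F x i) :
    ParetoEff X (fun x i => f x i / F x i) x₀ ↔
      ParetoEff X (fun x i => f x i - (f x₀ i / F x₀ i) * F x i) x₀ := by
  have key : ∀ x ∈ X, ∀ i,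
      (f x i / F x i ≤ f x₀ i / F x₀ i ↔
        f x i - (f x₀ i / F x₀ i) * F x i ≤ f x₀ i - (f x₀ i / F x₀ i) * F x₀ i) ∧
      (f x i / F x i = f x₀ i / F x₀ i ↔
        f x i - (f x₀ i / F x₀ i) * F x i = f x₀ i - (f x₀ i / F x₀ i) * F x₀ i) := by
    intro x hx i
    have hFx : 0 < F x i := hF x (hXU hx) i
    have hFx₀ : 0 < F x₀ i := hF x₀ (hXU hx₀) i
    have h0 : f x₀ i - (f x₀ i / F x₀ i) * F x₀ i = 0 := by
      field_simp
      simp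
    constructor
    · rw [h0, div_le_div_iff₀ hFx hFx₀, sub_nonpos, div_mul_eq_mul_div,
        le_div_iff₀ hFx₀]
    · rw [h0, div_eq_div_iff hFx.ne' hFx₀.ne', sub_eq_zero, div_mul_eq_mul_div,
        eq_div_iff hFx₀.ne']
  unfold ParetoEff
  constructor <;> intro h ⟨x, hx, hle, hne⟩ <;> refine h ⟨x, hx, ?_, ?_⟩
  · exact fun i => ((key x hx i).1).mpr (hle i)
  · intro heq
    apply hne
    funext i
    exact ((key x hx i).2).mp (congrFun heq i)
  · exact fun i => ((key x hx i).1).mp (hle i)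
  · intro heq
    apply hne
    funext i
    exact ((key x hx i).2).mpr (congrFun heq i)
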